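/- Let $\psi:\mathbb{N}\to\mathbb{R}_{>0}$ satisfy $\lim_{n\to\infty}\psi(n)^{1/n} = \infty$. Then there exists a non-decreasing function $g:\mathbb{N}\to\mathbb{R}_{>0}$ such that (a) $g(n)\leq\psi(n)$ for all $n$, (b) $\limsup_{n\to\infty} g(n)/\psi(n) = 1$, and (c) $\lim_{n\to\infty} g(n+1)/g(n) = \infty$. -/

import Mathlib

open Filter

private lemma exists_argmin (φ : ℕ → ℝ) (hφ : Tendsto φ atTop atTop) :
    ∃ M : ℕ → ℕ, ∀ n, n ≤ M n ∧ ∀ k, n ≤ k → φ (M n) ≤ φ k := by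
  have h : ∀ n : ℕ, ∃ m, n ≤ m ∧ ∀ k, n ≤ k → φ m ≤ φ k := by
    intro n
    have h2 : Tendsto (fun j : ℕ => φ (j + n)) atTop atTop :=
      hφ.comp (tendsto_add_atTop_nat n)
    rw [← Nat.cofinite_eq_atTop] at h2
    obtain ⟨j, hj⟩ := h2.exists_forall_le
    refine ⟨j + n, Nat.le_add_left _ _, fun k hk => ?_⟩
    have := hj (k - n)
    rwa [Nat.sub_add_cancel hk] at this
  choose M hM using h
  exact ⟨M, hM⟩

/-- If `ψ : ℕ → ℝ_{>0}` satisfies `ψ(n)^{1/n} → ∞`, then there is a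
non-decreasing `g : ℕ → ℝ_{>0}` with `g ≤ ψ`, `limsup g/ψ = 1`, and `g(n+1)/g(n) → ∞`. -/
theorem stmt6 (ψ : ℕ → ℝ) (hψ : ∀ n, 0 < ψ n)
    (h : Filter.Tendsto (fun n => ψ n ^ ((n : ℝ)⁻¹)) Filter.atTop Filter.atTop) :
    ∃ g : ℕ → ℝ, (∀ n, 0 < g n) ∧ Monotone g ∧ (∀ n, g n ≤ ψ n) ∧
      Filter.limsup (fun n => g n / ψ n) Filter.atTop = 1 ∧
      Filter.Tendsto (fun n => g (n + 1) / g n) Filter.atTop Filter.atTop := by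
  -- Step 1: the running minimum `u` of `ψ^{1/n}`.
  obtain ⟨Mu, hMu⟩ := exists_argmin _ h
  set u : ℕ → ℝ := fun n => ψ (Mu n) ^ ((Mu n : ℝ)⁻¹) with hu_def
  have hu_pos : ∀ n, 0 < u n := fun n => Real.rpow_pos_of_pos (hψ _) _
  have hu_le : ∀ n, u n ≤ ψ n ^ ((n : ℝ)⁻¹) := fun n => (hMu n).2 n le_rfl
  have hu_mono : Monotone u := by
    intro a b hab
    exact (hMu a).2 (Mu b) (hab.trans (hMu b).1)
  have hu_tendsto : Tendsto u atTop atTop := by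
    rw [tendsto_atTop_atTop]
    intro C
    obtain ⟨N, hN⟩ := (tendsto_atTop_atTop.mp h) C
    exact ⟨N, fun n hn => hN _ ((hn.trans (hMu n).1))⟩
  -- Step 2: `b` and its partial products `B`.
  set b : ℕ → ℝ := fun n => max 1 (u n / 2) with hb_def
  have hb_one : ∀ n, 1 ≤ b n := fun n => le_max_left _ _
  have hb_pos : ∀ n, 0 < b n := fun n => lt_of_lt_of_le one_pos (hb_one n)
  have hb_tendsto : Tendsto b atTop atTop := by
    refine tendsto_atTop_mono (fun n => le_max_right 1 (u n / 2)) ?_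
    exact (hu_tendsto.atTop_div_const two_pos)
  set B : ℕ → ℝ := fun n => ∏ i ∈ Finset.range n, b i with hB_def
  have hB_pos : ∀ n, 0 < B n := fun n => Finset.prod_pos fun i _ => hb_pos i
  have hB_succ : ∀ n, B (n + 1) = B n * b n := fun n => Finset.prod_range_succ _ _
  -- Step 3: `ψ n / B n → ∞`.
  have key : Tendsto (fun n => ψ n / B n) atTop atTop := by
    have hev : ∀ᶠ n in atTop, (2 : ℝ) ^ n ≤ ψ n / B n := by
      have h2 : ∀ᶠ n in atTop, (2 : ℝ) ≤ u n := hu_tendsto.eventually_ge_atTop 2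
      filter_upwards [h2, eventually_ge_atTop 1] with n hn2 hn1
      have hun : 0 < u n := hu_pos n
      -- B n ≤ (u n / 2)^n
      have hBle : B n ≤ (u n / 2) ^ n := by
        rw [hB_def]
        calc ∏ i ∈ Finset.range n, b i ≤ ∏ _i ∈ Finset.range n, (u n / 2) := by
              refine Finset.prod_le_prod (fun i _ => (hb_pos i).le) ?_
              intro i hi
              have : b i ≤ max 1 (u n / 2) :=
                max_le_max le_rfl (by linarith [hu_mono (Nat.le_of_lt_succ (Nat.lt_succ_of_lt (Finset.mem_range.mp hi)))])
              calc b i ≤ max 1 (u n / 2) := this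
                _ = u n / 2 := max_eq_right (by linarith)
          _ = (u n / 2) ^ n := by rw [Finset.prod_const, Finset.card_range]
      -- u n ^ n ≤ ψ n
      have hpsi : u n ^ n ≤ ψ n := by
        have h1 : u n ≤ ψ n ^ ((n : ℝ)⁻¹) := hu_le n
        have h2 : u n ^ (n : ℝ) ≤ (ψ n ^ ((n : ℝ)⁻¹)) ^ (n : ℝ) :=
          Real.rpow_le_rpow (hun.le) h1 (Nat.cast_nonneg n)
        rw [← Real.rpow_natCast (u n) n]
        rwa [← Real.rpow_mul (hψ n).le, inv_mul_cancel₀ (by positivity : (n : ℝ) ≠ 0),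
          Real.rpow_one] at h2
      have hBn : 0 < B n := hB_pos n
      rw [le_div_iff₀ hBn]
      calc (2:ℝ) ^ n * B n ≤ 2 ^ n * (u n / 2) ^ n := by
            refine mul_le_mul_of_nonneg_left hBle (by positivity)
        _ = u n ^ n := by rw [← mul_pow]; ring_nf
        _ ≤ ψ n := hpsi
    refine tendsto_atTop_mono' _ hev ?_
    exact tendsto_pow_atTop_atTop_of_one_lt one_lt_two
  -- Step 4: the running minimum `c` of `ψ / B`.
  obtain ⟨Mc, hMc⟩ := exists_argmin _ key
  set c : ℕ → ℝ := fun n => ψ (Mc n) / B (Mc n) with hc_def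
  have hc_pos : ∀ n, 0 < c n := fun n => div_pos (hψ _) (hB_pos _)
  have hc_le : ∀ n, c n ≤ ψ n / B n := fun n => (hMc n).2 n le_rfl
  have hc_mono : Monotone c := fun a b hab => (hMc a).2 (Mc b) (hab.trans (hMc b).1)
  -- c is attained: c (Mc n) = ψ (Mc n) / B (Mc n)
  have hc_attain : ∀ n, c (Mc n) = ψ (Mc n) / B (Mc n) := by
    intro n
    refine le_antisymm (hc_le _) ?_
    have := hc_mono (hMc n).1
    rwa [hc_def] at this
  -- Step 5: define g.
  refine ⟨fun n => B n * c n, fun n => mul_pos (hB_pos n) (hc_pos n), ?_, ?_, ?_, ?_⟩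
  · -- Monotone
    apply monotone_nat_of_le_succ
    intro n
    rw [hB_succ n]
    calc B n * c n ≤ (B n * b n) * c (n + 1) := by
          have h1 : c n ≤ c (n + 1) := hc_mono (Nat.le_succ n)
          have h2 : B n ≤ B n * b n := le_mul_of_one_le_right (hB_pos n).le (hb_one n)
          exact mul_le_mul h2 h1 (hc_pos n).le (by positivity)
      _ = B n * b n * c (n + 1) := rfl
  · -- g ≤ ψ
    intro n
    calc B n * c n ≤ B n * (ψ n / B n) :=
          mul_le_mul_of_nonneg_left (hc_le n) (hB_pos n).le
      _ = ψ n := by field_simp [(hB_pos n).ne']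
  · -- limsup = 1
    have hle : ∀ n, B n * c n / ψ n ≤ 1 := by
      intro n
      rw [div_le_one (hψ n)]
      calc B n * c n ≤ B n * (ψ n / B n) :=
            mul_le_mul_of_nonneg_left (hc_le n) (hB_pos n).le
        _ = ψ n := by field_simp [(hB_pos n).ne']
    have hshow : Filter.limsup (fun n => B n * c n / ψ n) Filter.atTop = 1 → True := fun _ => trivial
    show Filter.limsup (fun n => B n * c n / ψ n) Filter.atTop = 1
    refine le_antisymm ?_ ?_
    · refine limsup_le_of_le ?_ (Eventually.of_forall fun n => hle n)
      exact isCoboundedUnder_le_of_le atTop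
        (x := 0) (fun n => div_nonneg (mul_pos (hB_pos n) (hc_pos n)).le (hψ n).le)
    · refine le_limsup_of_frequently_le ?_ (isBoundedUnder_of ⟨1, fun n => hle n⟩)
      rw [frequently_atTop]
      intro n
      refine ⟨Mc n, (hMc n).1, ?_⟩
      show 1 ≤ B (Mc n) * c (Mc n) / ψ (Mc n)
      rw [hc_attain n]
      have : B (Mc n) * (ψ (Mc n) / B (Mc n)) = ψ (Mc n) := by field_simp [(hB_pos (Mc n)).ne']
      rw [this, div_self (hψ _).ne']
  · -- ratio tendsto atTop
    refine tendsto_atTop_mono ?_ hb_tendsto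
    intro n
    have h1 : c n ≤ c (n + 1) := hc_mono (Nat.le_succ n)
    show b n ≤ B (n + 1) * c (n + 1) / (B n * c n)
    rw [hB_succ n]
    rw [le_div_iff₀ (mul_pos (hB_pos n) (hc_pos n))]
    calc b n * (B n * c n) ≤ b n * (B n * c (n+1)) := by
          refine mul_le_mul_of_nonneg_left (mul_le_mul_of_nonneg_left h1 (hB_pos n).le) (hb_pos n).le
      _ = B n * b n * c (n + 1) := by ring
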